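/- Let δ_1 < δ_2 ≤ … ≤ δ_n (all positive) and c > 0 with c ≤ min_i m_i where m_i > 0. For each k ≥ 0, let x^{(k)} minimize ∑_i δ_i^k x_i^2 subject to ∑_i x_i = c and 0 ≤ x_i ≤ m_i. Then x^{(k)}_1 = c·δ_1^{-k}/(∑_j δ_j^{-k}), and as k → ∞, x^{(k)}_1 → c and x^{(k)}_i → 0 for all i ≥ 2. -/

import Mathlib

open Finset Filter

/-- When no capacity binds, the allocation is proportional to δ_i^{-k}, and as
    k → ∞ all work goes to the unique worker with smallest virtual welfare. -/
theorem stmt_9 (n : ℕ) (hn : 0 < n) (δ m : Fin n → ℝ) (c : ℝ)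
    (hδpos : ∀ i, 0 < δ i) (hmono : Monotone δ)
    (hstrict : ∀ i : Fin n, 0 < (i : ℕ) → δ ⟨0, hn⟩ < δ i)
    (hm : ∀ i, 0 < m i) (hc : 0 < c) (hcm : ∀ i, c ≤ m i)
    (X : ℝ → Fin n → ℝ)
    (hfeas : ∀ k : ℝ, 0 ≤ k →
      (∑ i, X k i = c ∧ ∀ i, 0 ≤ X k i ∧ X k i ≤ m i))
    (hopt : ∀ k : ℝ, 0 ≤ k →
      ∀ y : Fin n → ℝ, (∑ i, y i = c ∧ ∀ i, 0 ≤ y i ∧ y i ≤ m i) →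
        ∑ i, δ i ^ k * (X k i) ^ 2 ≤ ∑ i, δ i ^ k * (y i) ^ 2) :
    (∀ k : ℝ, 0 ≤ k →
      X k ⟨0, hn⟩ = c * (δ ⟨0, hn⟩) ^ (-k) / ∑ j, (δ j) ^ (-k)) ∧
    Tendsto (fun k : ℝ => X k ⟨0, hn⟩) atTop (nhds c) ∧
    ∀ i : Fin n, 0 < (i : ℕ) →
      Tendsto (fun k : ℝ => X k i) atTop (nhds 0) := by
  set i0 : Fin n := ⟨0, hn⟩ with hi0
  have hne : Nonempty (Fin n) := ⟨i0⟩
  have hSpos : ∀ k : ℝ, 0 < ∑ j, (δ j) ^ (-k) :=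
    fun k => Finset.sum_pos (fun j _ => Real.rpow_pos_of_pos (hδpos j) _) Finset.univ_nonempty
  -- Main formula: the minimizer equals the proportional allocation, for every coordinate.
  have key : ∀ k : ℝ, 0 ≤ k → ∀ i,
      X k i = c * (δ i) ^ (-k) / ∑ j, (δ j) ^ (-k) := by
    intro k hk i
    set S := ∑ j, (δ j) ^ (-k) with hS
    have hSp : 0 < S := hSpos k
    set y : Fin n → ℝ := fun i => c * (δ i) ^ (-k) / S with hy
    have hmul : ∀ i, (δ i) ^ k * y i = c / S := by
      intro i
      have h1 : (δ i) ^ k * (δ i) ^ (-k) = 1 := by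
        rw [← Real.rpow_add (hδpos i)]; simp
      simp only [hy]
      field_simp
      linear_combination h1
    have hysum : ∑ j, y j = c := by
      simp only [hy]
      rw [← Finset.sum_div, ← Finset.mul_sum, ← hS, mul_div_assoc,
        div_self (ne_of_gt hSp), mul_one]
    have hynn : ∀ j, 0 ≤ y j := by
      intro j
      have := Real.rpow_pos_of_pos (hδpos j) (-k)
      simp only [hy]
      positivity
    have hyle : ∀ j, y j ≤ m j := by
      intro j
      have h1 : (δ j) ^ (-k) ≤ S :=
        Finset.single_le_sum (f := fun j => (δ j) ^ (-k))
          (fun j _ => le_of_lt (Real.rpow_pos_of_pos (hδpos j) _)) (Finset.mem_univ j)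
      have h2 : y j ≤ c := by
        simp only [hy]
        rw [div_le_iff₀ hSp]
        nlinarith
      exact h2.trans (hcm j)
    have expand : ∀ z : Fin n → ℝ, ∑ j, z j = c →
        ∑ j, (δ j) ^ k * (z j - y j) ^ 2 = (∑ j, (δ j) ^ k * (z j) ^ 2) - c ^ 2 / S := by
      intro z hz
      have h1 : ∀ j, (δ j) ^ k * (z j - y j) ^ 2
          = (δ j) ^ k * (z j) ^ 2 - 2 * (c / S) * z j + (c / S) * y j := by
        intro j
        linear_combination (y j - 2 * z j) * hmul j
      calc ∑ j, (δ j) ^ k * (z j - y j) ^ 2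
          = ∑ j, ((δ j) ^ k * (z j) ^ 2 - 2 * (c / S) * z j + (c / S) * y j) :=
            Finset.sum_congr rfl (fun j _ => h1 j)
        _ = (∑ j, (δ j) ^ k * (z j) ^ 2) - 2 * (c / S) * (∑ j, z j)
              + (c / S) * (∑ j, y j) := by
            rw [Finset.sum_add_distrib, Finset.sum_sub_distrib, ← Finset.mul_sum,
              ← Finset.mul_sum]
        _ = (∑ j, (δ j) ^ k * (z j) ^ 2) - c ^ 2 / S := by
            rw [hz, hysum]; field_simp; ring
    obtain ⟨hXsum, hXb⟩ := hfeas k hk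
    have hyobj : ∑ j, (δ j) ^ k * (y j) ^ 2 = c ^ 2 / S := by
      have h := expand y hysum
      simp only [sub_self] at h
      simp only [ne_eq, OfNat.ofNat_ne_zero, not_false_eq_true, zero_pow, mul_zero,
        Finset.sum_const_zero] at h
      linarith
    have hle := hopt k hk y ⟨hysum, fun j => ⟨hynn j, hyle j⟩⟩
    have hX := expand (X k) hXsum
    have hsum0 : ∑ j, (δ j) ^ k * (X k j - y j) ^ 2 ≤ 0 := by
      rw [hX, hyobj] at *
      linarith
    have hterm : (δ i) ^ k * (X k i - y i) ^ 2 = 0 := by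
      have hnn : ∀ j ∈ Finset.univ, (0:ℝ) ≤ (δ j) ^ k * (X k j - y j) ^ 2 := by
        intro j _
        have := Real.rpow_pos_of_pos (hδpos j) k
        positivity
      have h0 : ∑ j, (δ j) ^ k * (X k j - y j) ^ 2 = 0 :=
        le_antisymm hsum0 (Finset.sum_nonneg hnn)
      exact (Finset.sum_eq_zero_iff_of_nonneg hnn).mp h0 i (Finset.mem_univ i)
    have hδk : (0:ℝ) < (δ i) ^ k := Real.rpow_pos_of_pos (hδpos i) k
    have : (X k i - y i) ^ 2 = 0 := by
      rcases mul_eq_zero.mp hterm with h | h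
      · exact absurd h (ne_of_gt hδk)
      · exact h
    have : X k i = y i := by nlinarith [sq_nonneg (X k i - y i)]
    simpa [hy] using this
  have hlimX0 : Tendsto (fun k : ℝ => X k i0) atTop (nhds c) := by
    -- denominator D k = ∑ (δ i0 / δ j)^k tends to 1
    have hD : Tendsto (fun k : ℝ => ∑ j, (δ i0 / δ j) ^ k) atTop
        (nhds (∑ j : Fin n, if j = i0 then (1:ℝ) else 0)) := by
      apply tendsto_finset_sum
      intro j _
      by_cases hj : j = i0
      · simp only [hj, div_self (ne_of_gt (hδpos i0)), eq_self_iff_true, if_true]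
        exact Tendsto.congr (fun k => (Real.one_rpow k).symm) tendsto_const_nhds
      · have hjpos : 0 < (j : ℕ) := by
          rcases Nat.eq_zero_or_pos (j : ℕ) with h | h
          · exact absurd (Fin.ext h) hj
          · exact h
        have hlt : δ i0 < δ j := hstrict j hjpos
        have hr0 : 0 < δ i0 / δ j := div_pos (hδpos i0) (hδpos j)
        have hr1 : δ i0 / δ j < 1 := (div_lt_one (hδpos j)).mpr hlt
        simp only [if_neg hj]
        exact tendsto_rpow_atTop_of_base_lt_one _ (by linarith) hr1
    have hD1 : Tendsto (fun k : ℝ => ∑ j, (δ i0 / δ j) ^ k) atTop (nhds 1) := by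
      have : (∑ j : Fin n, if j = i0 then (1:ℝ) else 0) = 1 := by simp
      rwa [this] at hD
    have heq : (fun k : ℝ => X k i0) =ᶠ[atTop]
        (fun k : ℝ => c / ∑ j, (δ i0 / δ j) ^ k) := by
      filter_upwards [eventually_ge_atTop (0:ℝ)] with k hk
      have hrw : ∀ j, (δ j) ^ (-k) = (δ i0) ^ (-k) * (δ i0 / δ j) ^ k := by
        intro j
        have h2 : (δ i0 / δ j) ^ k = (δ i0) ^ k * (δ j) ^ (-k) := by
          rw [div_eq_mul_inv, Real.mul_rpow (hδpos i0).le (inv_nonneg.mpr (hδpos j).le),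
            Real.inv_rpow (hδpos j).le, ← Real.rpow_neg (hδpos j).le]
        rw [h2, ← mul_assoc, ← Real.rpow_add (hδpos i0)]
        simp
      have hsum : ∑ j, (δ j) ^ (-k) = (δ i0) ^ (-k) * ∑ j, (δ i0 / δ j) ^ k := by
        rw [Finset.mul_sum]
        exact Finset.sum_congr rfl fun j _ => hrw j
      rw [key k hk i0, hsum]
      have h0 : (δ i0) ^ (-k) ≠ 0 := ne_of_gt (Real.rpow_pos_of_pos (hδpos i0) _)
      rw [mul_comm c ((δ i0) ^ (-k)), mul_div_mul_left _ _ h0]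
    have hlim : Tendsto (fun k : ℝ => c / ∑ j, (δ i0 / δ j) ^ k) atTop (nhds c) := by
      have := (tendsto_const_nhds : Tendsto (fun _ : ℝ => c) atTop (nhds c)).div hD1 one_ne_zero
      rw [div_one] at this; exact this
    exact Tendsto.congr' heq.symm hlim
  refine ⟨fun k hk => key k hk i0, hlimX0, ?_⟩
  intro i hi
  have hne0 : i ≠ i0 := by
    intro h
    rw [h, hi0] at hi
    simp at hi
  have hub : ∀ᶠ k : ℝ in atTop, X k i ≤ c - X k i0 := by
    filter_upwards [eventually_ge_atTop (0:ℝ)] with k hk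
    obtain ⟨hsum, hb⟩ := hfeas k hk
    have h1 : X k i ≤ ∑ j ∈ Finset.univ.erase i0, X k j :=
      Finset.single_le_sum (fun j _ => (hb j).1)
        (Finset.mem_erase.mpr ⟨hne0, Finset.mem_univ i⟩)
    have h2 : ∑ j ∈ Finset.univ.erase i0, X k j = c - X k i0 := by
      rw [Finset.sum_erase_eq_sub (Finset.mem_univ i0), hsum]
    linarith
  have hlb : ∀ᶠ k : ℝ in atTop, (0:ℝ) ≤ X k i := by
    filter_upwards [eventually_ge_atTop (0:ℝ)] with k hk
    exact ((hfeas k hk).2 i).1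
  have hlim2 : Tendsto (fun k : ℝ => c - X k i0) atTop (nhds 0) := by
    have h := (tendsto_const_nhds : Tendsto (fun _ : ℝ => c) atTop (nhds c)).sub hlimX0
    simpa using h
  exact tendsto_of_tendsto_of_tendsto_of_le_of_le' tendsto_const_nhds hlim2 hlb hub
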